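/- Let 𝔸 and 𝔹 be order k ≥ 2 tensors of dimensions n and m with 𝔸u = λ u^{[k-1]} and 𝔹v = μ v^{[k-1]}, and let w = u ⊗ v ∈ ℂ^{nm}. Then (𝔸 ⊗ I_m + I_n ⊗ 𝔹)w = (λ + μ) w^{[k-1]}. -/

import Mathlib

open scoped BigOperators

noncomputable section

/-- An "order (1 + |α|)" tensor of dimension `|I|` over `R`: entries indexed by a
head index in `I` and a tail of indices `α → I`. -/
abbrev Tensor (R I α : Type) : Type := I → (α → I) → R

/-- The general tensor product: `(A*B)_{i α₁ ⋯ α_m} = ∑ a_{i i₂ ⋯} ∏ b_{i_j α_j}`. -/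
def tmul {R I α β : Type} [CommSemiring R] [Fintype I] [DecidableEq α] [Fintype α]
    (A : Tensor R I α) (B : Tensor R I β) : Tensor R I (α × β) :=
  fun i f => ∑ t : α → I, A i t * ∏ j : α, B (t j) (fun b => f (j, b))

/-- The general tensor product of a tensor with a vector (an order-1 tensor). -/
def tapp {R I α : Type} [CommSemiring R] [Fintype I] [DecidableEq α] [Fintype α]
    (A : Tensor R I α) (x : I → R) : I → R :=
  fun i => ∑ t : α → I, A i t * ∏ j : α, x (t j)

/-- The general tensor product `P * A` where `P` is a matrix (an order-2 tensor). -/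
def matMulT {R I α : Type} [CommSemiring R] [Fintype I]
    (P : Matrix I I R) (A : Tensor R I α) : Tensor R I α :=
  fun i f => ∑ j : I, P i j * A j f

/-- The general tensor product `A * Q` where `Q` is a matrix (an order-2 tensor). -/
def tMulMat {R I α : Type} [CommSemiring R] [Fintype I] [DecidableEq α] [Fintype α]
    (A : Tensor R I α) (Q : Matrix I I R) : Tensor R I α :=
  fun i f => ∑ t : α → I, A i t * ∏ j : α, Q (t j) (f j)

/-- The unit tensor `𝕀`: entries `1` exactly on the diagonal. -/
def unitT (R I α : Type) [CommSemiring R] [DecidableEq I] [Fintype α] [DecidableEq α] :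
    Tensor R I α :=
  fun i f => if ∀ j, f j = i then 1 else 0

/-- The direct product of two tensors of the same order. -/
def dprod {R I J α : Type} [CommSemiring R]
    (A : Tensor R I α) (B : Tensor R J α) : Tensor R (I × J) α :=
  fun p f => A p.1 (fun j => (f j).1) * B p.2 (fun j => (f j).2)

end

/-- if `𝔸u = λ u^{[k]}` and `𝔹v = μ v^{[k]}` (tensors of order
`k + 1 ≥ 2`), then `w = u ⊗ v` satisfies `(𝔸 ⊗ I_m + I_n ⊗ 𝔹) w = (λ + μ) w^{[k]}`. -/
theorem dprod_sum_eigen (n m k : ℕ) (hk : 1 ≤ k)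
    (A : Tensor ℂ (Fin n) (Fin k)) (B : Tensor ℂ (Fin m) (Fin k))
    (lam mu : ℂ) (u : Fin n → ℂ) (v : Fin m → ℂ)
    (hu : tapp A u = fun i => lam * u i ^ k)
    (hv : tapp B v = fun j => mu * v j ^ k) :
    tapp (dprod A (unitT ℂ (Fin m) (Fin k)) + dprod (unitT ℂ (Fin n) (Fin k)) B)
        (fun p => u p.1 * v p.2) =
      fun p => (lam + mu) * (u p.1 * v p.2) ^ k := by
  have hA := congrFun hu
  have hB := congrFun hv
  simp only [tapp] at hA hB
  funext p
  obtain ⟨p1, p2⟩ := p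
  have key : ∀ (F : (Fin k → Fin n × Fin m) → ℂ),
      ∑ t, F t = ∑ s : Fin k → Fin n, ∑ r : Fin k → Fin m, F (fun j => (s j, r j)) := by
    intro F
    rw [← Equiv.sum_comp (Equiv.arrowProdEquivProdArrow (Fin k) (fun _ => Fin n) (fun _ => Fin m)).symm F,
      Fintype.sum_prod_type]
    rfl
  have key2 : ∀ (F : (Fin k → Fin n × Fin m) → ℂ),
      ∑ t, F t = ∑ r : Fin k → Fin m, ∑ s : Fin k → Fin n, F (fun j => (s j, r j)) := by
    intro F
    rw [key, Finset.sum_comm]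
  have h1 : ∀ s : Fin k → Fin n,
      (∑ r : Fin k → Fin m, ((A p1 fun j => s j) * unitT ℂ (Fin m) (Fin k) p2 fun j => r j)
        * ∏ j, u (s j) * v (r j)) = A p1 s * (∏ j, u (s j)) * v p2 ^ k := by
    intro s
    simp only [unitT]
    rw [Finset.sum_eq_single (fun _ => p2)]
    · rw [if_pos (fun _ => rfl)]
      simp [Finset.prod_mul_distrib, mul_assoc]
    · intro r _ hr
      have : ¬ ∀ j, r j = p2 := fun h => hr (funext h)
      simp [this]
    · simp
  have h2 : ∀ r : Fin k → Fin m,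
      (∑ s : Fin k → Fin n, ((unitT ℂ (Fin n) (Fin k) p1 fun j => s j) * B p2 fun j => r j)
        * ∏ j, u (s j) * v (r j)) = u p1 ^ k * (B p2 r * ∏ j, v (r j)) := by
    intro r
    simp only [unitT]
    rw [Finset.sum_eq_single (fun _ => p1)]
    · rw [if_pos (fun _ => rfl)]
      simp [Finset.prod_mul_distrib]
      ring
    · intro s _ hs
      have : ¬ ∀ j, s j = p1 := fun h => hs (funext h)
      simp [this]
    · simp
  have E1 : (∑ t : Fin k → Fin n × Fin m,
      (A p1 (fun j => (t j).1) * unitT ℂ (Fin m) (Fin k) p2 (fun j => (t j).2))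
        * ∏ j, u (t j).1 * v (t j).2) = lam * u p1 ^ k * v p2 ^ k := by
    rw [key]
    refine (Finset.sum_congr rfl fun s _ => h1 s).trans ?_
    rw [← Finset.sum_mul, hA p1]
  have E2 : (∑ t : Fin k → Fin n × Fin m,
      (unitT ℂ (Fin n) (Fin k) p1 (fun j => (t j).1) * B p2 (fun j => (t j).2))
        * ∏ j, u (t j).1 * v (t j).2) = u p1 ^ k * (mu * v p2 ^ k) := by
    rw [key2]
    refine (Finset.sum_congr rfl fun r _ => h2 r).trans ?_
    rw [← Finset.mul_sum, hB p2]
  simp only [tapp, dprod, Pi.add_apply, add_mul, Finset.sum_add_distrib]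
  exact (congrArg₂ (· + ·) E1 E2).trans (by ring)
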